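/- Let p be a prime with p ≡ 3 (mod 4). Then the quaternion algebra ℍ[ℚₚ, −1, −p] over the field ℚₚ of p-adic numbers is a division algebra: every nonzero element is a unit. (That is, the quaternion ℚ-algebra Q(−1, −p | ℚ) is ramified at p.) -/

import Mathlib

open Quaternion

section Aux

variable {p : ℕ} [Fact p.Prime]

private lemma aux_not_sq (h : p % 4 = 3) : ¬ IsSquare (-1 : ZMod p) := fun hs =>
  (ZMod.exists_sq_eq_neg_one_iff.mp hs) h

private lemma aux_norm_one (h : p % 4 = 3) (t : ℚ_[p]) (ht : ‖t‖ ≤ 1) :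
    ‖1 + t ^ 2‖ = 1 := by
  have h1 : ‖1 + t ^ 2‖ ≤ 1 := by
    refine le_trans (Padic.nonarchimedean _ _) ?_
    have : ‖t ^ 2‖ ≤ 1 := by
      rw [norm_pow]
      nlinarith [norm_nonneg t]
    exact max_le (le_of_eq norm_one) this
  rcases lt_or_eq_of_le h1 with hlt | heq
  · exfalso
    set T : ℤ_[p] := ⟨t, ht⟩ with hT
    have hlt' : ‖(1 + T ^ 2 : ℤ_[p])‖ < 1 := by
      show ‖((1 + T ^ 2 : ℤ_[p]) : ℚ_[p])‖ < 1
      push_cast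
      exact hlt
    have h0 : PadicInt.toZMod (1 + T ^ 2) = 0 := by
      rw [← RingHom.mem_ker, PadicInt.ker_toZMod, PadicInt.maximalIdeal_eq_span_p,
        Ideal.mem_span_singleton, ← PadicInt.norm_lt_one_iff_dvd]
      exact hlt'
    apply aux_not_sq h
    refine ⟨-(PadicInt.toZMod T), ?_⟩
    have : (1 : ZMod p) + (PadicInt.toZMod T) ^ 2 = 0 := by
      simpa using h0
    linear_combination -this
  · exact heq

private lemma aux_norm_sq (h : p % 4 = 3) {a b : ℚ_[p]} (ha : a ≠ 0) (hb : ‖b‖ ≤ ‖a‖) :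
    ‖a ^ 2 + b ^ 2‖ = ‖a‖ ^ 2 := by
  have ht : ‖b / a‖ ≤ 1 := by
    rw [norm_div, div_le_one (norm_pos_iff.mpr ha)]
    exact hb
  have key := aux_norm_one h (b / a) ht
  have : a ^ 2 + b ^ 2 = a ^ 2 * (1 + (b / a) ^ 2) := by
    field_simp
  rw [this, norm_mul, key, mul_one, norm_pow]

/-- The norm of a nonzero sum of two squares is an even power of `p`. -/
private lemma aux_main (h : p % 4 = 3) {a b : ℚ_[p]} (hab : ¬ (a = 0 ∧ b = 0)) :
    ∃ z : ℤ, ‖a ^ 2 + b ^ 2‖ = (p : ℝ) ^ (2 * z) := by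
  have hp1 : (1 : ℝ) < p := by exact_mod_cast (Fact.out : p.Prime).one_lt
  have hp0 : (p : ℝ) ≠ 0 := by positivity
  rcases le_total ‖b‖ ‖a‖ with hle | hle
  · have ha : a ≠ 0 := by
      rintro rfl
      simp only [norm_zero] at hle
      exact hab ⟨rfl, norm_le_zero_iff.mp hle⟩
    refine ⟨-a.valuation, ?_⟩
    rw [aux_norm_sq h ha hle, Padic.norm_eq_zpow_neg_valuation ha, sq, ← zpow_add₀ hp0]
    ring_nf
  · have hb : b ≠ 0 := by
      rintro rfl
      simp only [norm_zero] at hle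
      exact hab ⟨norm_le_zero_iff.mp hle, rfl⟩
    refine ⟨-b.valuation, ?_⟩
    rw [add_comm, aux_norm_sq h hb hle, Padic.norm_eq_zpow_neg_valuation hb, sq, ← zpow_add₀ hp0]
    ring_nf

private lemma aux_ne_zero (h : p % 4 = 3) {a b : ℚ_[p]} (hab : ¬ (a = 0 ∧ b = 0)) :
    a ^ 2 + b ^ 2 ≠ 0 := by
  obtain ⟨z, hz⟩ := aux_main h hab
  intro h0
  rw [h0, norm_zero] at hz
  have hp0 : (0 : ℝ) < p := by exact_mod_cast (Fact.out : p.Prime).pos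
  exact absurd hz.symm (ne_of_gt (zpow_pos hp0 _))

end Aux

/-- Let `p` be a prime with `p ≡ 3 (mod 4)`. Then the quaternion algebra
`ℍ[ℚₚ, −1, −p]` over the `p`-adic numbers is a division algebra: every nonzero
element is a unit. -/
theorem quaternionAlgebra_padic_neg_one_neg_p_isDivision (p : ℕ) [Fact p.Prime]
    (h : p % 4 = 3) :
    ∀ x : ℍ[ℚ_[p], -1, -(p : ℚ_[p])], x ≠ 0 → IsUnit x := by
  intro x hx
  have hp1 : (1 : ℝ) < p := by exact_mod_cast (Fact.out : p.Prime).one_lt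
  have hpQ : (p : ℚ_[p]) ≠ 0 := by
    exact_mod_cast (Nat.cast_ne_zero (R := ℚ_[p])).mpr (Fact.out : p.Prime).ne_zero
  set n : ℚ_[p] := (x * star x).re with hn
  have hre : n = (x.re ^ 2 + x.imI ^ 2) + (p : ℚ_[p]) * (x.imJ ^ 2 + x.imK ^ 2) := by
    simp only [hn, QuaternionAlgebra.re_mul, QuaternionAlgebra.re_star,
      QuaternionAlgebra.imI_star, QuaternionAlgebra.imJ_star, QuaternionAlgebra.imK_star]
    ring
  have hn0 : n ≠ 0 := by
    rw [hre]
    by_cases h12 : x.re = 0 ∧ x.imI = 0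
    · by_cases h34 : x.imJ = 0 ∧ x.imK = 0
      · exact absurd (QuaternionAlgebra.ext h12.1 h12.2 h34.1 h34.2) hx
      · intro h0
        rw [h12.1, h12.2] at h0
        have hB : (p : ℚ_[p]) * (x.imJ ^ 2 + x.imK ^ 2) = 0 := by linear_combination h0
        rcases mul_eq_zero.mp hB with hB | hB
        · exact hpQ hB
        · exact aux_ne_zero h h34 hB
    · by_cases h34 : x.imJ = 0 ∧ x.imK = 0
      · rw [h34.1, h34.2]
        simpa using aux_ne_zero h h12
      · intro h0
        obtain ⟨z1, hz1⟩ := aux_main h h12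
        obtain ⟨z2, hz2⟩ := aux_main h h34
        have heq : x.re ^ 2 + x.imI ^ 2 = -((p : ℚ_[p]) * (x.imJ ^ 2 + x.imK ^ 2)) := by
          linear_combination h0
        have : (p : ℝ) ^ (2 * z1) = (p : ℝ) ^ (-1 + 2 * z2) := by
          rw [← hz1, heq, norm_neg, norm_mul, hz2, Padic.norm_p, zpow_add₀ (by positivity),
            zpow_neg_one]
        have := zpow_right_injective₀ (by positivity) (ne_of_gt hp1) this
        omega
  refine ⟨⟨x, n⁻¹ • star x, ?_, ?_⟩, rfl⟩
  · rw [mul_smul_comm, QuaternionAlgebra.mul_star_eq_coe, ← hn,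
      QuaternionAlgebra.smul_coe, inv_mul_cancel₀ hn0, QuaternionAlgebra.coe_one]
  · rw [smul_mul_assoc, star_comm_self', QuaternionAlgebra.mul_star_eq_coe, ← hn,
      QuaternionAlgebra.smul_coe, inv_mul_cancel₀ hn0, QuaternionAlgebra.coe_one]
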